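/- Let p be an odd prime, and let i and j be positive integers with j odd, p not dividing j, pj ≤ 2i, and 2i < p². Set d = (pj-1)/2 and δ = (1-p)·∑_{s≥0} ⌊d/p^s⌋·p^s (a finite sum of integers, since ⌊d/p^s⌋ = 0 for p^s > d). Then 2i - 1 is not congruent to 2δ - 1 modulo 2p². -/
import Mathlib


/-- For an odd prime `p` and positive integers `i`, `j` with `j` odd, `p ∤ j`,
`pj ≤ 2i`, and `2i < p²`: with `d = (pj-1)/2` and
`δ = (1-p)·∑_{s≥0} ⌊d/p^s⌋·p^s` (a finite sum; all nonzero terms occur for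
`s ≤ d`), `2i - 1` is not congruent to `2δ - 1` modulo `2p²`. -/
theorem stmt11 (p i j : ℕ) (hp : p.Prime) (hpodd : Odd p) (hi : 0 < i) (hj : 0 < j)
    (hjodd : Odd j) (hpdvd : ¬ p ∣ j) (hpj : p * j ≤ 2 * i) (hlt : 2 * i < p ^ 2) :
    ¬ (2 * (i : ℤ) - 1 ≡
        2 * ((1 - (p : ℤ)) *
          ∑ s ∈ Finset.range ((p * j - 1) / 2 + 1),
            (((p * j - 1) / 2 / p ^ s : ℕ) : ℤ) * (p : ℤ) ^ s) - 1
        [ZMOD 2 * (p : ℤ) ^ 2]) := by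
  set d := (p * j - 1) / 2 with hd
  intro h
  have hp2 : 2 ≤ p := hp.two_le
  obtain ⟨q, hq⟩ := hpodd
  obtain ⟨m, hm⟩ := hjodd
  have hp3 : 3 ≤ p := by omega
  have key : p * j = 4 * (q * m) + 2 * q + 2 * m + 1 := by subst hq hm; ring
  have hdval : d = 2 * (q * m) + q + m := by
    rw [hd]; generalize q * m = t at key; omega
  have hdeq : d = q + p * m := by rw [hdval, hq]; ring
  have hdiv : d / p = m := by
    rw [hdeq, Nat.add_mul_div_left _ _ (by omega : 0 < p),
      Nat.div_eq_of_lt (by omega), Nat.zero_add]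
  have h2d1 : 2 * d + 1 = p * j := by
    rw [hdval]; generalize q * m = t at key; omega
  have hdlt : d < p ^ 2 := by nlinarith
  have hd1 : 1 ≤ d := by nlinarith
  -- evaluate the sum
  have hsum : (∑ s ∈ Finset.range (d + 1), ((d / p ^ s : ℕ) : ℤ) * (p : ℤ) ^ s)
      = (d : ℤ) + (m : ℤ) * (p : ℤ) := by
    rw [← Finset.sum_subset (Finset.range_subset_range.2 (show 2 ≤ d + 1 by omega))
      (by
        intro s hs hns
        simp only [Finset.mem_range] at hs hns
        have hs2 : 2 ≤ s := by omega
        have : d / p ^ s = 0 := Nat.div_eq_of_lt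
          (lt_of_lt_of_le hdlt (Nat.pow_le_pow_right (by omega) hs2))
        simp [this])]
    simp only [Finset.sum_range_succ, Finset.sum_range_zero, pow_zero, pow_one,
      Nat.div_one, hdiv, zero_add, mul_one]
  rw [hsum] at h
  have hdvd := h.dvd
  obtain ⟨k, hk⟩ := hdvd
  have h2dz : (2 : ℤ) * (d : ℤ) + 1 = (p : ℤ) * (j : ℤ) := by exact_mod_cast h2d1
  have hmz : (2 : ℤ) * (m : ℤ) + 1 = (j : ℤ) := by exact_mod_cast hm.symm
  have hmain : (2 * (i : ℤ) - 2 * p * j + 1) = (p : ℤ) ^ 2 * (1 - 2 * j - 2 * k) := by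
    linear_combination (-1 : ℤ) * hk + (1 - (p : ℤ)) * h2dz + (1 - (p : ℤ)) * (p : ℤ) * hmz
  have ht0 : (1 - 2 * (j : ℤ) - 2 * k) ≠ 0 := by omega
  have c1 : (2 * i : ℤ) < (p : ℤ) ^ 2 := by exact_mod_cast hlt
  have c2 : ((p : ℤ) * j) ≤ 2 * i := by exact_mod_cast hpj
  have c3 : (0 : ℤ) < (p : ℤ) * j := by
    have : 0 < p * j := Nat.mul_pos (by omega) hj
    exact_mod_cast this
  have habs : |(p : ℤ) ^ 2 * (1 - 2 * j - 2 * k)| < (p : ℤ) ^ 2 := by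
    rw [← hmain, abs_lt]
    constructor <;> linarith
  have hge : (p : ℤ) ^ 2 ≤ |(p : ℤ) ^ 2 * (1 - 2 * j - 2 * k)| := by
    rw [abs_mul, abs_of_nonneg (by positivity : (0:ℤ) ≤ (p : ℤ) ^ 2)]
    exact le_mul_of_one_le_right (by positivity) (Int.one_le_abs (by omega))
  linarith
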